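/- Let n ≥ 1 and let K and L be nonempty compact convex subsets of ℝⁿ with vol(K) = vol(L) = 1. If c ∈ ℝ is such that (vol(K + εL) − vol(K))/ε → c as ε → 0⁺, then c ≥ n. -/

import Mathlib

open MeasureTheory Pointwise ENNReal Set
open scoped NNReal

lemma pl_amgm {t : ℝ} (ht0 : 0 < t) (ht1 : t < 1) (a b : ℝ≥0∞) :
    a ^ (1 - t) * b ^ t ≤ ENNReal.ofReal (1 - t) * a + ENNReal.ofReal t * b := by
  have h1t : (0:ℝ) < 1 - t := by linarith
  rcases eq_or_ne a ∞ with rfl | ha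
  · rcases eq_or_ne b 0 with rfl | hb
    · simp [ENNReal.zero_rpow_of_pos ht0]
    · have : ENNReal.ofReal (1 - t) * ∞ = ∞ := by
        rw [ENNReal.mul_top]; simp [ENNReal.ofReal_eq_zero]; linarith
      simp [this]
  · rcases eq_or_ne b ∞ with rfl | hb
    · rcases eq_or_ne a 0 with rfl | ha0
      · simp [ENNReal.zero_rpow_of_pos h1t]
      · have : ENNReal.ofReal t * ∞ = ∞ := by
          rw [ENNReal.mul_top]; simp [ENNReal.ofReal_eq_zero]; linarith
        simp [this]
    · lift a to ℝ≥0 using ha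
      lift b to ℝ≥0 using hb
      have key := NNReal.geom_mean_le_arith_mean2_weighted (Real.toNNReal (1 - t))
        (Real.toNNReal t) a b ?_
      · have e1 : ((Real.toNNReal (1 - t) : ℝ≥0) : ℝ) = 1 - t := Real.coe_toNNReal _ h1t.le
        have e2 : ((Real.toNNReal t : ℝ≥0) : ℝ) = t := Real.coe_toNNReal _ ht0.le
        rw [e1, e2] at key
        calc (a:ℝ≥0∞) ^ (1-t) * (b:ℝ≥0∞) ^ t
            = ((a ^ (1-t) * b ^ t : ℝ≥0) : ℝ≥0∞) := by
              rw [ENNReal.coe_mul, ENNReal.coe_rpow_of_nonneg _ h1t.le,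
                ENNReal.coe_rpow_of_nonneg _ ht0.le]
          _ ≤ ((Real.toNNReal (1-t) * a + Real.toNNReal t * b : ℝ≥0) : ℝ≥0∞) :=
              ENNReal.coe_le_coe.2 key
          _ = ENNReal.ofReal (1 - t) * a + ENNReal.ofReal t * b := by
              rw [ENNReal.coe_add, ENNReal.coe_mul, ENNReal.coe_mul]; rfl
      · have : Real.toNNReal (1 - t) + Real.toNNReal t = Real.toNNReal ((1-t) + t) :=
          (Real.toNNReal_add h1t.le ht0.le).symm
        rw [this]; norm_num

lemma real_vol_add_compact {A B : Set ℝ} (hA : IsCompact A) (hB : IsCompact B)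
    (hAne : A.Nonempty) (hBne : B.Nonempty) :
    volume A + volume B ≤ volume (A + B) := by
  set a := sSup A with ha_def
  set b := sInf B with hb_def
  have haA : a ∈ A := hA.sSup_mem hAne
  have hbB : b ∈ B := hB.sInf_mem hBne
  have hsub : (b +ᵥ A) ∪ (a +ᵥ B) ⊆ A + B := by
    rintro z (⟨x, hx, rfl⟩ | ⟨y, hy, rfl⟩)
    · exact ⟨x, hx, b, hbB, add_comm x b⟩
    · exact ⟨a, haA, y, hy, rfl⟩
  have hinter : (b +ᵥ A) ∩ (a +ᵥ B) ⊆ {a + b} := by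
    rintro z ⟨⟨x, hx, rfl⟩, ⟨y, hy, hz⟩⟩
    have hxa : x ≤ a := le_csSup hA.bddAbove hx
    have hby : b ≤ y := csInf_le hB.bddBelow hy
    have hz' : a + y = b + x := hz
    have : b + x = a + b := by
      have h1 : b + x ≤ b + a := by linarith
      have h2 : a + b ≤ a + y := by linarith
      rw [← hz'] at *
      linarith
    show (b +ᵥ x) ∈ ({a + b} : Set ℝ)
    simp only [vadd_eq_add, Set.mem_singleton_iff]
    linarith
  have hmeasB : MeasurableSet (a +ᵥ B) := (hB.isClosed.measurableSet).const_vadd a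
  have key := measure_union_add_inter (μ := volume) (b +ᵥ A) hmeasB
  have h0 : volume ((b +ᵥ A) ∩ (a +ᵥ B)) = 0 :=
    measure_mono_null hinter Real.volume_singleton
  rw [h0, add_zero] at key
  calc volume A + volume B = volume (b +ᵥ A) + volume (a +ᵥ B) := by
        rw [measure_vadd, measure_vadd]
    _ = volume ((b +ᵥ A) ∪ (a +ᵥ B)) := key.symm
    _ ≤ volume (A + B) := measure_mono hsub

lemma real_vol_add {A B : Set ℝ} (hA : MeasurableSet A) (hB : MeasurableSet B)
    (hAne : A.Nonempty) (hBne : B.Nonempty) :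
    volume A + volume B ≤ volume (A + B) := by
  obtain ⟨a₀, ha₀⟩ := hAne
  obtain ⟨b₀, hb₀⟩ := hBne
  have hBsub : b₀ +ᵥ A ⊆ A + B := by rintro z ⟨x, hx, rfl⟩; exact ⟨x, hx, b₀, hb₀, add_comm x b₀⟩
  have hAsub : a₀ +ᵥ B ⊆ A + B := by rintro z ⟨y, hy, rfl⟩; exact ⟨a₀, ha₀, y, hy, rfl⟩
  rcases eq_or_ne (volume A) ∞ with hAinf | hAfin
  · have : volume (A + B) = ∞ := by
      refine top_le_iff.1 ?_
      calc (∞:ℝ≥0∞) = volume (b₀ +ᵥ A) := by rw [measure_vadd, hAinf]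
        _ ≤ volume (A + B) := measure_mono hBsub
    simp [this]
  rcases eq_or_ne (volume B) ∞ with hBinf | hBfin
  · have : volume (A + B) = ∞ := by
      refine top_le_iff.1 ?_
      calc (∞:ℝ≥0∞) = volume (a₀ +ᵥ B) := by rw [measure_vadd, hBinf]
        _ ≤ volume (A + B) := measure_mono hAsub
    simp [this]
  refine ENNReal.le_of_forall_pos_le_add fun ε hε _ => ?_
  have hε2 : ((ε : ℝ≥0∞) / 2) ≠ 0 := by
    simp [ENNReal.div_eq_zero_iff, (ENNReal.coe_pos.2 hε).ne']
  obtain ⟨K₁, hK₁A, hK₁c, hK₁v⟩ := hA.exists_isCompact_lt_add hAfin hε2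
  obtain ⟨K₂, hK₂B, hK₂c, hK₂v⟩ := hB.exists_isCompact_lt_add hBfin hε2
  have hmain : volume K₁ + volume K₂ ≤ volume (A + B) := by
    rcases K₁.eq_empty_or_nonempty with rfl | hK₁ne
    · simp only [measure_empty, zero_add]
      calc volume K₂ = volume (a₀ +ᵥ K₂) := (measure_vadd _ _ _).symm
        _ ≤ volume (a₀ +ᵥ B) := measure_mono (vadd_set_mono hK₂B)
        _ ≤ volume (A + B) := measure_mono hAsub
    rcases K₂.eq_empty_or_nonempty with rfl | hK₂ne
    · simp only [measure_empty, add_zero]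
      calc volume K₁ = volume (b₀ +ᵥ K₁) := (measure_vadd _ _ _).symm
        _ ≤ volume (b₀ +ᵥ A) := measure_mono (vadd_set_mono hK₁A)
        _ ≤ volume (A + B) := measure_mono hBsub
    calc volume K₁ + volume K₂ ≤ volume (K₁ + K₂) :=
          real_vol_add_compact hK₁c hK₂c hK₁ne hK₂ne
      _ ≤ volume (A + B) := measure_mono (add_subset_add hK₁A hK₂B)
  calc volume A + volume B ≤ (volume K₁ + ε/2) + (volume K₂ + ε/2) :=
        add_le_add hK₁v.le hK₂v.le
    _ = (volume K₁ + volume K₂) + ((ε:ℝ≥0∞)/2 + (ε:ℝ≥0∞)/2) := add_add_add_comm _ _ _ _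
    _ = (volume K₁ + volume K₂) + ε := by rw [ENNReal.add_halves]
    _ ≤ volume (A + B) + ε := add_le_add_left hmain _

lemma layer_repr {φ : ℝ → ℝ≥0∞} (hφ : Measurable φ) (hφ1 : ∀ x, φ x ≤ 1) :
    ∫⁻ x, φ x = ∫⁻ r in Set.Ioi (0:ℝ), volume {x | ENNReal.ofReal r < φ x} := by
  have hne : ∀ x, φ x ≠ ∞ := fun x => (lt_of_le_of_lt (hφ1 x) one_lt_top).ne
  have h1 : ∀ x, ENNReal.ofReal ((φ x).toReal) = φ x := fun x => ofReal_toReal (hne x)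
  calc ∫⁻ x, φ x = ∫⁻ x, ENNReal.ofReal ((φ x).toReal) := by simp_rw [h1]
    _ = ∫⁻ r in Set.Ioi (0:ℝ), volume {x | r < (φ x).toReal} :=
        lintegral_eq_lintegral_meas_lt volume (Filter.Eventually.of_forall fun x => toReal_nonneg)
          (hφ.ennreal_toReal.aemeasurable)
    _ = ∫⁻ r in Set.Ioi (0:ℝ), volume {x | ENNReal.ofReal r < φ x} := by
        refine setLIntegral_congr_fun measurableSet_Ioi
          (fun r hr => ?_)
        congr 1
        ext x
        simp only [Set.mem_setOf_eq]
        rw [ENNReal.ofReal_lt_iff_lt_toReal (le_of_lt hr) (hne x)]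

lemma trunc_iSup (a : ℝ≥0∞) : ⨆ (N : ℕ), (a ⊓ ((N : ℝ≥0∞) + 1)) = a := by
  apply le_antisymm (iSup_le fun N => inf_le_left)
  rcases eq_or_ne a ∞ with rfl | ha
  · calc (∞:ℝ≥0∞) = ⨆ (N : ℕ), ((N:ℝ≥0∞)) := (ENNReal.iSup_natCast).symm
      _ ≤ ⨆ (N : ℕ), (∞ ⊓ ((N:ℝ≥0∞) + 1)) := by
          refine iSup_mono fun N => ?_
          simp
  · obtain ⟨N, hN⟩ := ENNReal.exists_nat_gt ha
    have : a ⊓ ((N:ℝ≥0∞) + 1) = a := inf_eq_left.2 (le_trans hN.le le_self_add)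
    exact le_iSup_of_le N this.ge

lemma pl_dim1_core {t : ℝ} (ht0 : 0 < t) (ht1 : t < 1) {f g h : ℝ → ℝ≥0∞}
    (hf : Measurable f) (hg : Measurable g) (hh : Measurable h)
    (hsupf : ⨆ x, f x = 1) (hsupg : ⨆ x, g x = 1)
    (hc : ∀ x y, f x ^ (1 - t) * g y ^ t ≤ h ((1 - t) * x + t * y)) :
    ENNReal.ofReal (1 - t) * (∫⁻ x, f x) + ENNReal.ofReal t * (∫⁻ x, g x) ≤ ∫⁻ x, h x := by
  have h1t : (0:ℝ) < 1 - t := by linarith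
  have hf1 : ∀ x, f x ≤ 1 := fun x => hsupf ▸ le_iSup f x
  have hg1 : ∀ x, g x ≤ 1 := fun x => hsupg ▸ le_iSup g x
  set h' : ℝ → ℝ≥0∞ := fun x => h x ⊓ 1 with hh'def
  have hh' : Measurable h' := hh.inf measurable_const
  have hh'1 : ∀ x, h' x ≤ 1 := fun x => inf_le_right
  -- antitone measurability
  have hantf : Antitone (fun r : ℝ => volume {x | ENNReal.ofReal r < f x}) := by
    intro r₁ r₂ hr
    exact measure_mono fun x hx => lt_of_le_of_lt (ENNReal.ofReal_le_ofReal hr) hx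
  have hantg : Antitone (fun r : ℝ => volume {x | ENNReal.ofReal r < g x}) := by
    intro r₁ r₂ hr
    exact measure_mono fun x hx => lt_of_le_of_lt (ENNReal.ofReal_le_ofReal hr) hx
  -- pointwise inequality
  have key : ∀ r ∈ Set.Ioi (0:ℝ),
      ENNReal.ofReal (1 - t) * volume {x | ENNReal.ofReal r < f x}
        + ENNReal.ofReal t * volume {x | ENNReal.ofReal r < g x}
      ≤ volume {x | ENNReal.ofReal r < h' x} := by
    intro r hr
    rcases le_or_gt 1 r with hr1 | hr1
    · have hef : {x | ENNReal.ofReal r < f x} = ∅ := by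
        ext x; simp only [Set.mem_setOf_eq, Set.mem_empty_iff_false, iff_false, not_lt]
        calc f x ≤ 1 := hf1 x
          _ = ENNReal.ofReal 1 := ENNReal.ofReal_one.symm
          _ ≤ ENNReal.ofReal r := ENNReal.ofReal_le_ofReal hr1
      have heg : {x | ENNReal.ofReal r < g x} = ∅ := by
        ext x; simp only [Set.mem_setOf_eq, Set.mem_empty_iff_false, iff_false, not_lt]
        calc g x ≤ 1 := hg1 x
          _ = ENNReal.ofReal 1 := ENNReal.ofReal_one.symm
          _ ≤ ENNReal.ofReal r := ENNReal.ofReal_le_ofReal hr1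
      simp [hef, heg]
    · set ρ := ENNReal.ofReal r with hρdef
      have hρ0 : 0 < ρ := ENNReal.ofReal_pos.2 hr
      have hρ1 : ρ < 1 := ENNReal.ofReal_lt_one.2 hr1
      have hρtop : ρ ≠ ∞ := ofReal_ne_top
      set Sf := {x | ρ < f x} with hSfdef
      set Sg := {x | ρ < g x} with hSgdef
      have hSfm : MeasurableSet Sf := hf measurableSet_Ioi
      have hSgm : MeasurableSet Sg := hg measurableSet_Ioi
      have hSfne : Sf.Nonempty := by
        have : ρ < ⨆ x, f x := hsupf ▸ hρ1
        obtain ⟨x, hx⟩ := lt_iSup_iff.1 this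
        exact ⟨x, hx⟩
      have hSgne : Sg.Nonempty := by
        have : ρ < ⨆ x, g x := hsupg ▸ hρ1
        obtain ⟨x, hx⟩ := lt_iSup_iff.1 this
        exact ⟨x, hx⟩
      have hsub : (1 - t) • Sf + t • Sg ⊆ {x | ρ < h' x} := by
        rintro z ⟨u, ⟨x, hx, rfl⟩, v, ⟨y, hy, rfl⟩, rfl⟩
        have hρt0 : ρ ^ t ≠ 0 := (ENNReal.rpow_pos hρ0 hρtop).ne'
        have hρttop : ρ ^ t ≠ ∞ := ENNReal.rpow_ne_top_of_nonneg ht0.le hρtop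
        have step1 : ρ = ρ ^ (1 - t) * ρ ^ t := by
          rw [← ENNReal.rpow_add _ _ hρ0.ne' hρtop]
          norm_num
        have step2 : ρ ^ (1 - t) * ρ ^ t < f x ^ (1 - t) * ρ ^ t :=
          (ENNReal.mul_lt_mul_iff_left hρt0 hρttop).2 (ENNReal.rpow_lt_rpow hx h1t)
        have step3 : f x ^ (1 - t) * ρ ^ t ≤ f x ^ (1 - t) * g y ^ t :=
          mul_le_mul_right (ENNReal.rpow_le_rpow hy.le ht0.le) _
        have hρh : ρ < h ((1 - t) * x + t * y) :=
          lt_of_lt_of_le (step1 ▸ lt_of_lt_of_le step2 step3) (hc x y)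
        show ρ < h' ((1 - t) • x + t • y)
        have : ((1 - t) • x + t • y : ℝ) = (1 - t) * x + t * y := rfl
        rw [hh'def, this]
        exact lt_inf_iff.2 ⟨hρh, hρ1⟩
      have hsmulf : MeasurableSet ((1 - t) • Sf) := hSfm.const_smul₀ (1 - t)
      have hsmulg : MeasurableSet (t • Sg) := hSgm.const_smul₀ t
      have hvolf : volume ((1 - t) • Sf) = ENNReal.ofReal (1 - t) * volume Sf := by
        rw [Measure.addHaar_smul_of_nonneg volume h1t.le Sf, Module.finrank_self, pow_one]
      have hvolg : volume (t • Sg) = ENNReal.ofReal t * volume Sg := by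
        rw [Measure.addHaar_smul_of_nonneg volume ht0.le Sg, Module.finrank_self, pow_one]
      calc ENNReal.ofReal (1 - t) * volume Sf + ENNReal.ofReal t * volume Sg
          = volume ((1 - t) • Sf) + volume (t • Sg) := by rw [hvolf, hvolg]
        _ ≤ volume ((1 - t) • Sf + t • Sg) :=
            real_vol_add hsmulf hsmulg (hSfne.smul_set) (hSgne.smul_set)
        _ ≤ volume {x | ρ < h' x} := measure_mono hsub
  -- integrate
  have hmono : Antitone (fun r : ℝ => volume {x | ENNReal.ofReal r < h' x}) := by
    intro r₁ r₂ hr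
    exact measure_mono fun x hx => lt_of_le_of_lt (ENNReal.ofReal_le_ofReal hr) hx
  calc ENNReal.ofReal (1 - t) * (∫⁻ x, f x) + ENNReal.ofReal t * (∫⁻ x, g x)
      = ENNReal.ofReal (1 - t) * (∫⁻ r in Set.Ioi (0:ℝ), volume {x | ENNReal.ofReal r < f x})
        + ENNReal.ofReal t * (∫⁻ r in Set.Ioi (0:ℝ), volume {x | ENNReal.ofReal r < g x}) := by
        rw [layer_repr hf hf1, layer_repr hg hg1]
    _ = ∫⁻ r in Set.Ioi (0:ℝ), (ENNReal.ofReal (1 - t) * volume {x | ENNReal.ofReal r < f x}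
        + ENNReal.ofReal t * volume {x | ENNReal.ofReal r < g x}) := by
        rw [lintegral_add_left ((hantf.measurable).const_mul _),
          lintegral_const_mul _ hantf.measurable, lintegral_const_mul _ hantg.measurable]
    _ ≤ ∫⁻ r in Set.Ioi (0:ℝ), volume {x | ENNReal.ofReal r < h' x} :=
        setLIntegral_mono hmono.measurable key
    _ = ∫⁻ x, h' x := (layer_repr hh' hh'1).symm
    _ ≤ ∫⁻ x, h x := lintegral_mono fun x => inf_le_left

lemma pl_dim1 {t : ℝ} (ht0 : 0 < t) (ht1 : t < 1) {f g h : ℝ → ℝ≥0∞}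
    (hf : Measurable f) (hg : Measurable g) (hh : Measurable h)
    (hc : ∀ x y, f x ^ (1 - t) * g y ^ t ≤ h ((1 - t) * x + t * y)) :
    (∫⁻ x, f x) ^ (1 - t) * (∫⁻ x, g x) ^ t ≤ ∫⁻ x, h x := by
  have h1t : (0:ℝ) < 1 - t := by linarith
  by_cases hf0 : ∫⁻ x, f x = 0
  · rw [hf0, ENNReal.zero_rpow_of_pos h1t, zero_mul]; exact zero_le
  by_cases hg0 : ∫⁻ x, g x = 0
  · rw [hg0, ENNReal.zero_rpow_of_pos ht0, mul_zero]; exact zero_le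
  have hMf : (⨆ x, f x) ≠ 0 := by
    intro hM
    apply hf0
    have : ∀ x, f x = 0 := fun x => le_antisymm (hM ▸ le_iSup f x) zero_le
    simp [this]
  have hMg : (⨆ x, g x) ≠ 0 := by
    intro hM
    apply hg0
    have : ∀ x, g x = 0 := fun x => le_antisymm (hM ▸ le_iSup g x) zero_le
    simp [this]
  set F : ℕ → ℝ → ℝ≥0∞ := fun N x => f x ⊓ ((N:ℝ≥0∞) + 1) with hFdef
  set G : ℕ → ℝ → ℝ≥0∞ := fun N x => g x ⊓ ((N:ℝ≥0∞) + 1) with hGdef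
  have hFm : ∀ N, Measurable (F N) := fun N => hf.inf measurable_const
  have hGm : ∀ N, Measurable (G N) := fun N => hg.inf measurable_const
  have key : ∀ N M : ℕ,
      (∫⁻ x, F N x) ^ (1 - t) * (∫⁻ x, G M x) ^ t ≤ ∫⁻ x, h x := by
    intro N M
    set aN := (⨆ x, f x) ⊓ ((N:ℝ≥0∞) + 1) with haNdef
    set bM := (⨆ x, g x) ⊓ ((M:ℝ≥0∞) + 1) with hbMdef
    have hposN : (0:ℝ≥0∞) < (N:ℝ≥0∞) + 1 := lt_of_lt_of_le zero_lt_one le_add_self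
    have hposM : (0:ℝ≥0∞) < (M:ℝ≥0∞) + 1 := lt_of_lt_of_le zero_lt_one le_add_self
    have haN0 : aN ≠ 0 := (lt_inf_iff.2 ⟨pos_iff_ne_zero.2 hMf, hposN⟩).ne'
    have hbM0 : bM ≠ 0 := (lt_inf_iff.2 ⟨pos_iff_ne_zero.2 hMg, hposM⟩).ne'
    have hfinN : ((N:ℝ≥0∞) + 1) ≠ ∞ := by
      exact ENNReal.add_ne_top.2 ⟨ENNReal.natCast_ne_top N, ENNReal.one_ne_top⟩
    have hfinM : ((M:ℝ≥0∞) + 1) ≠ ∞ := by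
      exact ENNReal.add_ne_top.2 ⟨ENNReal.natCast_ne_top M, ENNReal.one_ne_top⟩
    have haNtop : aN ≠ ∞ := fun hcon => hfinN (top_le_iff.1 (hcon ▸ inf_le_right))
    have hbMtop : bM ≠ ∞ := fun hcon => hfinM (top_le_iff.1 (hcon ▸ inf_le_right))
    have hsupFN : (⨆ x, F N x) = aN := (iSup_inf_eq f ((N:ℝ≥0∞) + 1)).symm
    have hsupGM : (⨆ x, G M x) = bM := (iSup_inf_eq g ((M:ℝ≥0∞) + 1)).symm
    set f' : ℝ → ℝ≥0∞ := fun x => aN⁻¹ * F N x with hf'def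
    set g' : ℝ → ℝ≥0∞ := fun x => bM⁻¹ * G M x with hg'def
    set Kc : ℝ≥0∞ := (aN⁻¹) ^ (1 - t) * (bM⁻¹) ^ t with hKcdef
    set h'' : ℝ → ℝ≥0∞ := fun x => Kc * h x with hh''def
    have hf' : Measurable f' := (hFm N).const_mul _
    have hg' : Measurable g' := (hGm M).const_mul _
    have hh'' : Measurable h'' := hh.const_mul _
    have hsupf' : (⨆ x, f' x) = 1 := by
      calc (⨆ x, aN⁻¹ * F N x) = aN⁻¹ * ⨆ x, F N x := (ENNReal.mul_iSup _ _).symm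
        _ = aN⁻¹ * aN := by rw [hsupFN]
        _ = 1 := ENNReal.inv_mul_cancel haN0 haNtop
    have hsupg' : (⨆ x, g' x) = 1 := by
      calc (⨆ x, bM⁻¹ * G M x) = bM⁻¹ * ⨆ x, G M x := (ENNReal.mul_iSup _ _).symm
        _ = bM⁻¹ * bM := by rw [hsupGM]
        _ = 1 := ENNReal.inv_mul_cancel hbM0 hbMtop
    have hcond : ∀ x y, f' x ^ (1 - t) * g' y ^ t ≤ h'' ((1 - t) * x + t * y) := by
      intro x y
      have e1 : f' x ^ (1 - t) = (aN⁻¹) ^ (1 - t) * (F N x) ^ (1 - t) :=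
        ENNReal.mul_rpow_of_nonneg _ _ h1t.le
      have e2 : g' y ^ t = (bM⁻¹) ^ t * (G M y) ^ t :=
        ENNReal.mul_rpow_of_nonneg _ _ ht0.le
      rw [e1, e2, mul_mul_mul_comm]
      refine mul_le_mul_right ?_ Kc
      calc (F N x) ^ (1 - t) * (G M y) ^ t ≤ f x ^ (1 - t) * g y ^ t :=
            mul_le_mul' (ENNReal.rpow_le_rpow inf_le_left h1t.le)
              (ENNReal.rpow_le_rpow inf_le_left ht0.le)
        _ ≤ h ((1 - t) * x + t * y) := hc x y
    have hcore := pl_dim1_core ht0 ht1 hf' hg' hh'' hsupf' hsupg' hcond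
    have hamgm := pl_amgm ht0 ht1 (∫⁻ x, f' x) (∫⁻ x, g' x)
    have hint : (∫⁻ x, f' x) ^ (1 - t) * (∫⁻ x, g' x) ^ t ≤ Kc * ∫⁻ x, h x := by
      calc (∫⁻ x, f' x) ^ (1 - t) * (∫⁻ x, g' x) ^ t
          ≤ ENNReal.ofReal (1 - t) * (∫⁻ x, f' x) + ENNReal.ofReal t * (∫⁻ x, g' x) := hamgm
        _ ≤ ∫⁻ x, h'' x := hcore
        _ = Kc * ∫⁻ x, h x := lintegral_const_mul _ hh
    have hintf' : ∫⁻ x, f' x = aN⁻¹ * ∫⁻ x, F N x := lintegral_const_mul _ (hFm N)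
    have hintg' : ∫⁻ x, g' x = bM⁻¹ * ∫⁻ x, G M x := lintegral_const_mul _ (hGm M)
    have hexp : (∫⁻ x, f' x) ^ (1 - t) * (∫⁻ x, g' x) ^ t
        = Kc * ((∫⁻ x, F N x) ^ (1 - t) * (∫⁻ x, G M x) ^ t) := by
      rw [hintf', hintg', ENNReal.mul_rpow_of_nonneg _ _ h1t.le,
        ENNReal.mul_rpow_of_nonneg _ _ ht0.le, mul_mul_mul_comm]
    have hK0 : Kc ≠ 0 :=
      mul_ne_zero (ENNReal.rpow_pos (pos_iff_ne_zero.2 (ENNReal.inv_ne_zero.2 haNtop))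
          (ENNReal.inv_ne_top.2 haN0)).ne'
        (ENNReal.rpow_pos (pos_iff_ne_zero.2 (ENNReal.inv_ne_zero.2 hbMtop))
          (ENNReal.inv_ne_top.2 hbM0)).ne'
    have hKtop : Kc ≠ ∞ :=
      ENNReal.mul_ne_top (ENNReal.rpow_ne_top_of_nonneg h1t.le (ENNReal.inv_ne_top.2 haN0))
        (ENNReal.rpow_ne_top_of_nonneg ht0.le (ENNReal.inv_ne_top.2 hbM0))
    exact (ENNReal.mul_le_mul_iff_right hK0 hKtop).1 (hexp ▸ hint)
  have hFmono : Monotone F := by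
    intro N M hNM x
    exact inf_le_inf le_rfl (add_le_add_left (Nat.cast_le.2 hNM) 1)
  have hGmono : Monotone G := by
    intro N M hNM x
    exact inf_le_inf le_rfl (add_le_add_left (Nat.cast_le.2 hNM) 1)
  have hIf : ∫⁻ x, f x = ⨆ N, ∫⁻ x, F N x := by
    rw [← lintegral_iSup hFm hFmono]
    congr 1
    funext x
    exact (trunc_iSup (f x)).symm
  have hIg : ∫⁻ x, g x = ⨆ M, ∫⁻ x, G M x := by
    rw [← lintegral_iSup hGm hGmono]
    congr 1
    funext x
    exact (trunc_iSup (g x)).symm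
  rw [hIf, hIg]
  have e1 : (⨆ N, ∫⁻ x, F N x) ^ (1 - t) = ⨆ N, (∫⁻ x, F N x) ^ (1 - t) :=
    ((ENNReal.orderIsoRpow (1 - t) h1t).leftOrdContinuous).map_iSup _
  have e2 : (⨆ M, ∫⁻ x, G M x) ^ t = ⨆ M, (∫⁻ x, G M x) ^ t :=
    ((ENNReal.orderIsoRpow t ht0).leftOrdContinuous).map_iSup _
  rw [e1, e2, iSup_mul]
  refine iSup_le fun N => ?_
  rw [ENNReal.mul_iSup]
  exact iSup_le fun M => key N M

def PLM (t : ℝ) (E : Type*) [MeasurableSpace E] [AddCommMonoid E] [Module ℝ E]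
    (μ : Measure E) : Prop :=
  ∀ f g h : E → ℝ≥0∞, Measurable f → Measurable g → Measurable h →
    (∀ x y, f x ^ (1 - t) * g y ^ t ≤ h ((1 - t) • x + t • y)) →
    (∫⁻ x, f x ∂μ) ^ (1 - t) * (∫⁻ x, g x ∂μ) ^ t ≤ ∫⁻ x, h x ∂μ

lemma plm_real {t : ℝ} (ht0 : 0 < t) (ht1 : t < 1) : PLM t ℝ volume := by
  intro f g h hf hg hh hc
  exact pl_dim1 ht0 ht1 hf hg hh fun x y => hc x y

lemma plm_transfer {t : ℝ} {E F : Type*} [MeasurableSpace E] [AddCommMonoid E] [Module ℝ E]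
    [MeasurableSpace F] [AddCommMonoid F] [Module ℝ F]
    {μ : Measure E} {ν : Measure F} (e : E ≃ᵐ F) (hmp : MeasurePreserving e μ ν)
    (hlin : ∀ x y : E, e ((1 - t) • x + t • y) = (1 - t) • e x + t • e y)
    (hF : PLM t F ν) : PLM t E μ := by
  intro f g h hf hg hh hc
  have hfm : Measurable (f ∘ e.symm) := hf.comp e.symm.measurable
  have hgm : Measurable (g ∘ e.symm) := hg.comp e.symm.measurable
  have hhm : Measurable (h ∘ e.symm) := hh.comp e.symm.measurable
  have hc' : ∀ x y : F, (f ∘ e.symm) x ^ (1 - t) * (g ∘ e.symm) y ^ t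
      ≤ (h ∘ e.symm) ((1 - t) • x + t • y) := by
    intro x y
    have hx : x = e (e.symm x) := (e.apply_symm_apply x).symm
    have hy : y = e (e.symm y) := (e.apply_symm_apply y).symm
    calc (f ∘ e.symm) x ^ (1 - t) * (g ∘ e.symm) y ^ t
        ≤ h ((1 - t) • (e.symm x) + t • (e.symm y)) := hc _ _
      _ = (h ∘ e.symm) ((1 - t) • x + t • y) := by
          simp only [Function.comp_apply]
          congr 1
          conv_rhs => rw [hx, hy, ← hlin, e.symm_apply_apply]
  have key := hF (f ∘ e.symm) (g ∘ e.symm) (h ∘ e.symm) hfm hgm hhm hc'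
  have hint : ∀ φ : E → ℝ≥0∞, Measurable φ → ∫⁻ x, (φ ∘ e.symm) x ∂ν = ∫⁻ x, φ x ∂μ := by
    intro φ hφ
    rw [← hmp.map_eq, lintegral_map_equiv (φ ∘ e.symm) e]
    simp [Function.comp]
  rw [hint f hf, hint g hg, hint h hh] at key
  exact key

lemma plm_prod {t : ℝ} {α β : Type*} [MeasurableSpace α] [AddCommMonoid α] [Module ℝ α]
    [MeasurableSpace β] [AddCommMonoid β] [Module ℝ β]
    {μ : Measure α} {ν : Measure β} [SFinite ν] [SigmaFinite ν]
    (hα : PLM t α μ) (hβ : PLM t β ν) : PLM t (α × β) (μ.prod ν) := by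
  intro f g h hf hg hh hc
  set F : α → ℝ≥0∞ := fun x => ∫⁻ y, f (x, y) ∂ν with hFdef
  set G : α → ℝ≥0∞ := fun x => ∫⁻ y, g (x, y) ∂ν with hGdef
  set H : α → ℝ≥0∞ := fun x => ∫⁻ y, h (x, y) ∂ν with hHdef
  have hFm : Measurable F := Measurable.lintegral_prod_right (f := fun x y => f (x, y)) hf
  have hGm : Measurable G := Measurable.lintegral_prod_right (f := fun x y => g (x, y)) hg
  have hHm : Measurable H := Measurable.lintegral_prod_right (f := fun x y => h (x, y)) hh
  have hcond : ∀ x₀ y₀ : α, F x₀ ^ (1 - t) * G y₀ ^ t ≤ H ((1 - t) • x₀ + t • y₀) := by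
    intro x₀ y₀
    refine hβ (fun u => f (x₀, u)) (fun v => g (y₀, v))
      (fun w => h ((1 - t) • x₀ + t • y₀, w))
      (hf.comp measurable_prodMk_left) (hg.comp measurable_prodMk_left)
      (hh.comp measurable_prodMk_left) ?_
    intro u v
    have := hc (x₀, u) (y₀, v)
    simpa [Prod.smul_mk, Prod.mk_add_mk] using this
  have key := hα F G H hFm hGm hHm hcond
  rw [lintegral_prod f hf.aemeasurable, lintegral_prod g hg.aemeasurable,
    lintegral_prod h hh.aemeasurable]
  exact key

lemma plm_pi {t : ℝ} (ht0 : 0 < t) (ht1 : t < 1) :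
    ∀ n : ℕ, PLM t (Fin n → ℝ) volume := by
  intro n
  induction n with
  | zero =>
    intro f g h hf hg hh hc
    have huniv : (volume : Measure (Fin 0 → ℝ)) Set.univ = 1 := by
      rw [volume_pi, Measure.pi_univ]
      simp
    have hlint : ∀ φ : (Fin 0 → ℝ) → ℝ≥0∞, ∫⁻ x, φ x ∂volume = φ default := by
      intro φ
      have : φ = fun _ => φ default := by
        funext x
        congr 1
        exact Subsingleton.elim _ _
      rw [this, lintegral_const, huniv, mul_one]
    rw [hlint f, hlint g, hlint h]
    have := hc default default
    have hd : ((1 - t) • (default : Fin 0 → ℝ) + t • default) = default :=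
      Subsingleton.elim _ _
    rwa [hd] at this
  | succ n ih =>
    have hprod : PLM t (ℝ × (Fin n → ℝ)) ((volume : Measure ℝ).prod volume) :=
      plm_prod (plm_real ht0 ht1) ih
    have hvol : (volume : Measure (ℝ × (Fin n → ℝ))) = (volume : Measure ℝ).prod volume :=
      Measure.volume_eq_prod _ _
    exact plm_transfer (MeasurableEquiv.piFinSuccAbove (fun _ : Fin (n + 1) => ℝ) 0)
      (volume_preserving_piFinSuccAbove (fun _ : Fin (n + 1) => ℝ) 0)
      (fun x y => rfl) (hvol ▸ hprod)

lemma plm_euclidean {t : ℝ} (ht0 : 0 < t) (ht1 : t < 1) (n : ℕ) :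
    PLM t (EuclideanSpace ℝ (Fin n)) volume := by
  refine plm_transfer (MeasurableEquiv.toLp 2 (Fin n → ℝ)).symm
    (EuclideanSpace.volume_preserving_symm_measurableEquiv_toLp (Fin n)) (fun x y => rfl)
    (plm_pi ht0 ht1 n)

lemma bm_mult {n : ℕ} {t : ℝ} (ht0 : 0 < t) (ht1 : t < 1)
    {A B : Set (EuclideanSpace ℝ (Fin n))} (hA : IsCompact A) (hB : IsCompact B) :
    (volume A) ^ (1 - t) * (volume B) ^ t ≤ volume ((1 - t) • A + t • B) := by
  have h1t : (0:ℝ) < 1 - t := by linarith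
  have hAm : MeasurableSet A := hA.isClosed.measurableSet
  have hBm : MeasurableSet B := hB.isClosed.measurableSet
  set C := (1 - t) • A + t • B with hCdef
  have hCc : IsCompact C := (hA.smul (1 - t)).add (hB.smul t)
  have hCm : MeasurableSet C := hCc.isClosed.measurableSet
  have key := plm_euclidean ht0 ht1 n (A.indicator 1) (B.indicator 1) (C.indicator 1)
    (measurable_one.indicator hAm) (measurable_one.indicator hBm)
    (measurable_one.indicator hCm) ?_
  · rwa [lintegral_indicator_one hAm, lintegral_indicator_one hBm,
      lintegral_indicator_one hCm] at key
  · intro x y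
    by_cases hx : x ∈ A
    · by_cases hy : y ∈ B
      · have hmem : (1 - t) • x + t • y ∈ C :=
          Set.add_mem_add (Set.smul_mem_smul_set hx) (Set.smul_mem_smul_set hy)
        rw [Set.indicator_of_mem hx, Set.indicator_of_mem hy, Set.indicator_of_mem hmem]
        simp
      · rw [Set.indicator_of_notMem hy]
        rw [ENNReal.zero_rpow_of_pos ht0, mul_zero]
        exact zero_le
    · rw [Set.indicator_of_notMem hx]
      rw [ENNReal.zero_rpow_of_pos (by linarith : (0:ℝ) < 1 - t), zero_mul]
      exact zero_le

theorem mixed_volume_normalized_inequality (n : ℕ) (hn : 1 ≤ n)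
    (K L : Set (EuclideanSpace ℝ (Fin n)))
    (hK : IsCompact K) (hKc : Convex ℝ K) (hKne : K.Nonempty)
    (hL : IsCompact L) (hLc : Convex ℝ L) (hLne : L.Nonempty)
    (hKv : volume K = 1) (hLv : volume L = 1)
    (c : ℝ)
    (hc : Filter.Tendsto
      (fun ε : ℝ => ((volume (K + ε • L)).toReal - (volume K).toReal) / ε)
      (nhdsWithin 0 (Set.Ioi 0)) (nhds c)) :
    c ≥ n := by
  refine ge_of_tendsto hc (eventually_nhdsWithin_of_forall fun ε hε => ?_)
  have hε : (0:ℝ) < ε := hε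
  have hε1 : (0:ℝ) < 1 + ε := by linarith
  set t : ℝ := ε / (1 + ε) with htdef
  have ht0 : 0 < t := div_pos hε hε1
  have ht1 : t < 1 := by rw [htdef, div_lt_one hε1]; linarith
  have halg : ∀ x y : EuclideanSpace ℝ (Fin n),
      (1 + ε) • ((1 - t) • x + t • y) = x + ε • y := by
    intro x y
    rw [smul_add, smul_smul, smul_smul]
    have e1 : (1 + ε) * (1 - t) = 1 := by
      rw [htdef]; field_simp; ring
    have e2 : (1 + ε) * t = ε := by
      rw [htdef]; field_simp
    rw [e1, e2, one_smul]
  have hCeq : K + ε • L = (1 + ε) • ((1 - t) • K + t • L) := by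
    ext z
    constructor
    · rintro ⟨x, hx, w, ⟨y, hy, rfl⟩, rfl⟩
      refine ⟨(1 - t) • x + t • y,
        Set.add_mem_add (Set.smul_mem_smul_set hx) (Set.smul_mem_smul_set hy), halg x y⟩
    · rintro ⟨w, ⟨u, ⟨p, hp, rfl⟩, v, ⟨q, hq, rfl⟩, rfl⟩, rfl⟩
      show (1 + ε) • ((1 - t) • p + t • q) ∈ K + ε • L
      rw [halg p q]
      exact Set.add_mem_add hp (Set.smul_mem_smul_set hq)
  have hBM : 1 ≤ volume ((1 - t) • K + t • L) := by
    have := bm_mult ht0 ht1 hK hL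
    rwa [hKv, hLv, ENNReal.one_rpow, ENNReal.one_rpow, one_mul] at this
  have hvol : ENNReal.ofReal ((1 + ε) ^ n) ≤ volume (K + ε • L) := by
    rw [hCeq, Measure.addHaar_smul_of_nonneg volume hε1.le, finrank_euclideanSpace_fin]
    calc ENNReal.ofReal ((1 + ε) ^ n) = ENNReal.ofReal ((1 + ε) ^ n) * 1 := (mul_one _).symm
      _ ≤ ENNReal.ofReal ((1 + ε) ^ n) * volume ((1 - t) • K + t • L) :=
          mul_le_mul_right hBM _
  have hfin : volume (K + ε • L) ≠ ∞ := (hK.add (hL.smul ε)).measure_lt_top.ne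
  have hto : (1 + ε) ^ n ≤ (volume (K + ε • L)).toReal :=
    (ENNReal.ofReal_le_iff_le_toReal hfin).1 hvol
  have hber : 1 + (n:ℝ) * ε ≤ (1 + ε) ^ n := one_add_mul_le_pow (by linarith) n
  rw [hKv, ENNReal.toReal_one, le_div_iff₀ hε]
  linarith
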